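/- Let α and r be integers with α ≥ 1 and r ≥ 2. Then N(α+1,r;1,1,1,0) = 4·N(α,r;1,1,1,0) + (2^r − 1)·(2^{r−1} − 1)·2^{3α+4(r−2)}. -/
import Mathlib


open Finset

/-- The Mixed Generalized Gaussian Number `N(α,β;k₀,k₁,k₂,k₃)`. -/
def MGN (a b k₀ k₁ k₂ k₃ : ℕ) : ℚ :=
  ((∏ i ∈ range k₀, ((2 ^ a - 2 ^ i : ℚ) * 2 ^ b)) *
   (∏ i ∈ range k₁, ((8 ^ b - 4 ^ b * 2 ^ i : ℚ) * 2 ^ a)) *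
   (∏ i ∈ range k₂, ((4 ^ b - 2 ^ (b + k₁ + i) : ℚ) * 2 ^ a)) *
   (∏ i ∈ range k₃, (2 ^ b - 2 ^ (k₁ + k₂ + i) : ℚ))) /
  ((∏ i ∈ range k₀, (2 ^ (k₀ + k₁ + k₂ + k₃) - 2 ^ (k₁ + k₂ + k₃ + i) : ℚ)) *
   (∏ i ∈ range k₁, ((8 ^ k₁ - 4 ^ k₁ * 2 ^ i : ℚ) * 2 ^ (k₀ + 2 * k₂ + k₃))) *
   (∏ i ∈ range k₂, ((4 ^ k₂ - 2 ^ (k₂ + i) : ℚ) * 2 ^ (k₀ + 2 * k₁ + k₃))) *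
   (∏ i ∈ range k₃, (2 ^ (k₁ + k₂ + k₃) - 2 ^ (k₁ + k₂ + i) : ℚ)))

/-- Recurrence: `N(α+1,r;1,1,1,0) = 4·N(α,r;1,1,1,0) + (2^r-1)·(2^(r-1)-1)·2^(3α+4(r-2))`
for `α ≥ 1` and `r ≥ 2`. -/
theorem MGN_recurrence (α r : ℕ) (hα : 1 ≤ α) (hr : 2 ≤ r) :
    MGN (α + 1) r 1 1 1 0 =
      4 * MGN α r 1 1 1 0 +
        ((2 : ℚ) ^ r - 1) * (2 ^ (r - 1) - 1) * 2 ^ (3 * α + 4 * (r - 2)) := by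
  obtain ⟨s, rfl⟩ : ∃ s, r = s + 2 := ⟨r - 2, by omega⟩
  obtain ⟨t, rfl⟩ : ∃ t, α = t + 1 := ⟨α - 1, by omega⟩
  simp only [MGN, prod_range_one, prod_range_zero, Nat.add_sub_cancel]
  rw [show s+2-1 = s+1 from rfl, show (4:ℚ) = 2^2 by norm_num, show (8:ℚ) = 2^3 by norm_num]
  simp only [← pow_mul, ← pow_add]
  ring
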